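/- Let C be a bialgebra with a projection onto a Hopf algebra H (bialgebra maps i: H → C, π: C → H, π∘i = id_H). Define Π = id_C ⋆ (i∘S∘π), the convolution product in End(C), i.e., Π(c) = c₁ i(S(π(c₂))). Then (C, Π) is a Rota-Baxter coalgebra of weight −1: Π(c₁)⊗Π(c₂) = Π(c)₁⊗Π(Π(c)₂) + Π(Π(c)₁)⊗Π(c)₂ − Π(c)₁⊗Π(c)₂ for all c ∈ C. -/

import Mathlib

open TensorProduct LinearMap

open Coalgebra


section Conv
variable {K : Type*} [CommSemiring K] {D : Type*} [AddCommMonoid D] [Module K D]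
  [Coalgebra K D] {A : Type*} [Semiring A] [Algebra K A]

/-- Convolution product on `Hom(D, A)`. -/
noncomputable def conv (f g : D →ₗ[K] A) : D →ₗ[K] A :=
  mul' K A ∘ₗ map f g ∘ₗ comul

/-- Convolution unit. -/
noncomputable def convUnit : D →ₗ[K] A :=
  Algebra.linearMap K A ∘ₗ counit

lemma conv_apply_repr (f g : D →ₗ[K] A) {x : D} {ι : Type*} (r : Repr K x ι) :
    conv f g x = ∑ n ∈ r.index, f (r.left n) * g (r.right n) := by
  simp only [conv, coe_comp, Function.comp_apply, ← r.eq, map_sum, map_tmul, mul'_apply]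

lemma conv_assoc (f g h : D →ₗ[K] A) : conv (conv f g) h = conv f (conv g h) := by
  have key : ((mul' K A ∘ₗ map (mul' K A) h) ∘ₗ rTensor D (map f g)) ∘ₗ
      (TensorProduct.assoc K D D D).symm.toLinearMap
      = mul' K A ∘ₗ map f (mul' K A ∘ₗ map g h) := by
    ext x y z
    simp [mul_assoc]
  have e1 : map (conv f g) h
      = (map (mul' K A) h ∘ₗ rTensor D (map f g)) ∘ₗ rTensor D comul := by
    simp only [conv, rTensor, ← map_comp, comp_id, id_comp, comp_assoc]
  have e2 : map f (conv g h) = map f (mul' K A ∘ₗ map g h) ∘ₗ lTensor D comul := by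
    rw [show map f (conv g h) = map (f ∘ₗ LinearMap.id) ((mul' K A ∘ₗ map g h) ∘ₗ comul) by
      rw [comp_id, comp_assoc]; rfl, map_comp]; rfl
  show mul' K A ∘ₗ map (conv f g) h ∘ₗ comul = mul' K A ∘ₗ map f (conv g h) ∘ₗ comul
  rw [e1, e2]
  simp only [comp_assoc]
  rw [← coassoc_symm]
  simp only [← comp_assoc]
  rw [key]

lemma conv_unit_right (f : D →ₗ[K] A) : conv f convUnit = f := by
  apply LinearMap.ext; intro x
  have h2 : ∑ n ∈ (ℛ K x).index, counit (R := K) ((ℛ K x).right n) • (ℛ K x).left n = x := by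
    have h3 := congrArg (TensorProduct.rid K D).toLinearMap (sum_tmul_counit_eq (ℛ K x))
    simpa only [map_sum, LinearEquiv.coe_coe, TensorProduct.rid_tmul, one_smul] using h3
  rw [conv_apply_repr f convUnit (ℛ K x)]
  calc ∑ n ∈ (ℛ K x).index, f ((ℛ K x).left n) * convUnit ((ℛ K x).right n)
      = ∑ n ∈ (ℛ K x).index, f (counit (R := K) ((ℛ K x).right n) • (ℛ K x).left n) := by
        apply Finset.sum_congr rfl; intro n _
        simp [convUnit, Algebra.smul_def, Algebra.commutes, map_smul]
    _ = f x := by rw [← map_sum, h2]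

lemma conv_unit_left (f : D →ₗ[K] A) : conv convUnit f = f := by
  apply LinearMap.ext; intro x
  have h2 : ∑ n ∈ (ℛ K x).index, counit (R := K) ((ℛ K x).left n) • (ℛ K x).right n = x := by
    have h3 := congrArg (TensorProduct.lid K D).toLinearMap (sum_counit_tmul_eq (ℛ K x))
    simpa only [map_sum, LinearEquiv.coe_coe, TensorProduct.lid_tmul, one_smul] using h3
  rw [conv_apply_repr convUnit f (ℛ K x)]
  calc ∑ n ∈ (ℛ K x).index, convUnit ((ℛ K x).left n) * f ((ℛ K x).right n)
      = ∑ n ∈ (ℛ K x).index, f (counit (R := K) ((ℛ K x).left n) • (ℛ K x).right n) := by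
        apply Finset.sum_congr rfl; intro n _
        simp [convUnit, Algebra.smul_def, map_smul]
    _ = f x := by rw [← map_sum, h2]

lemma conv_inv_unique {f g h : D →ₗ[K] A} (hgf : conv g f = convUnit)
    (hfh : conv f h = convUnit) : g = h := by
  have : conv g (conv f h) = conv (conv g f) h := (conv_assoc g f h).symm
  rwa [hfh, hgf, conv_unit_right, conv_unit_left] at this

end Conv

section ConvBilin
variable {K : Type*} [CommSemiring K] {D : Type*} [AddCommMonoid D] [Module K D]
  [Coalgebra K D] {A : Type*} [Semiring A] [Algebra K A]

lemma conv_add_left (f g h : D →ₗ[K] A) : conv (f + g) h = conv f h + conv g h := by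
  simp only [conv, map_add_left, add_comp, comp_add]
lemma conv_add_right (f g h : D →ₗ[K] A) : conv f (g + h) = conv f g + conv f h := by
  simp only [conv, map_add_right, add_comp, comp_add]
lemma conv_smul_left (c : K) (f g : D →ₗ[K] A) : conv (c • f) g = c • conv f g := by
  simp only [conv, map_smul_left, smul_comp, comp_smul]
lemma conv_smul_right (c : K) (f g : D →ₗ[K] A) : conv f (c • g) = c • conv f g := by
  simp only [conv, map_smul_right, smul_comp, comp_smul]
lemma conv_zero_left (f : D →ₗ[K] A) : conv (0 : D →ₗ[K] A) f = 0 := by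
  apply LinearMap.ext; intro x
  rw [conv_apply_repr _ _ (ℛ K x)]; simp
lemma conv_zero_right (f : D →ₗ[K] A) : conv f (0 : D →ₗ[K] A) = 0 := by
  apply LinearMap.ext; intro x
  rw [conv_apply_repr _ _ (ℛ K x)]; simp

end ConvBilin

/-- Type synonym for `H →ₗ[K] H` carrying the convolution algebra structure. -/
def ConvEnd (K H : Type*) [CommSemiring K] [AddCommMonoid H] [Module K H] := H →ₗ[K] H

namespace ConvEnd
variable {K H : Type*} [CommSemiring K] [Semiring H] [Algebra K H] [Coalgebra K H]

instance : AddCommMonoid (ConvEnd K H) := inferInstanceAs (AddCommMonoid (H →ₗ[K] H))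
instance : Module K (ConvEnd K H) := inferInstanceAs (Module K (H →ₗ[K] H))

/-- Interpret a linear endomorphism as an element of the convolution algebra. -/
def of (f : H →ₗ[K] H) : ConvEnd K H := f

noncomputable instance : Semiring (ConvEnd K H) :=
  { (inferInstance : AddCommMonoid (ConvEnd K H)) with
    mul := fun f g => of (conv f g)
    one := of convUnit
    mul_assoc := fun f g h => conv_assoc f g h
    one_mul := fun f => conv_unit_left f
    mul_one := fun f => conv_unit_right f
    left_distrib := fun f g h => conv_add_right f g h
    right_distrib := fun f g h => conv_add_left f g h
    zero_mul := fun f => conv_zero_left f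
    mul_zero := fun f => conv_zero_right f }

lemma mul_def (f g : ConvEnd K H) : f * g = conv f g := rfl
lemma one_def : (1 : ConvEnd K H) = (convUnit : H →ₗ[K] H) := rfl

noncomputable instance : Algebra K (ConvEnd K H) :=
  Algebra.ofModule (fun c f g => conv_smul_left c f g) (fun c f g => conv_smul_right c f g)

lemma algebraMap_apply (c : K) :
    algebraMap K (ConvEnd K H) c = c • (convUnit : H →ₗ[K] H) := by
  rw [Algebra.algebraMap_eq_smul_one]; rfl

end ConvEnd

section ReprHelpers
variable {K : Type*} [CommSemiring K] {D : Type*} [AddCommMonoid D] [Module K D]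
  [Coalgebra K D]

lemma sum_counit_smul_left {x : D} {ι : Type*} (r : Repr K x ι) :
    ∑ n ∈ r.index, counit (R := K) (r.right n) • r.left n = x := by
  have h3 := congrArg (TensorProduct.rid K D).toLinearMap (sum_tmul_counit_eq r)
  simpa only [map_sum, LinearEquiv.coe_coe, TensorProduct.rid_tmul, one_smul] using h3

lemma sum_counit_smul_right {x : D} {ι : Type*} (r : Repr K x ι) :
    ∑ n ∈ r.index, counit (R := K) (r.left n) • r.right n = x := by
  have h3 := congrArg (TensorProduct.lid K D).toLinearMap (sum_counit_tmul_eq r)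
  simpa only [map_sum, LinearEquiv.coe_coe, TensorProduct.lid_tmul, one_smul] using h3

/-- Generalized coassociativity: the balanced 4-leg expansion equals the
`h₁ ⊗ ((h₂₁ ⊗ h₂₂) ⊗ h₃)`-type expansion. -/
lemma fourLeg :
    map (comul (R := K) (A := D)) comul ∘ₗ comul =
      (TensorProduct.assoc K D D (D ⊗[K] D)).symm.toLinearMap
        ∘ₗ lTensor D (TensorProduct.assoc K D D D).toLinearMap
        ∘ₗ lTensor D (rTensor D comul)
        ∘ₗ lTensor D comul ∘ₗ comul := by
  have n2 : (TensorProduct.assoc K D D (D ⊗[K] D)).symm.toLinearMap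
        ∘ₗ lTensor D (lTensor D (comul (R := K) (A := D)))
      = lTensor (D ⊗[K] D) comul ∘ₗ (TensorProduct.assoc K D D D).symm.toLinearMap := by
    ext x y z; simp
  have n2' := fun z => LinearMap.congr_fun n2 z
  simp only [coe_comp, Function.comp_apply, LinearEquiv.coe_coe] at n2'
  apply LinearMap.ext; intro h
  simp only [coe_comp, Function.comp_apply, LinearEquiv.coe_coe]
  have e1 : lTensor D (rTensor D comul) (lTensor D comul (comul h))
      = lTensor D ((TensorProduct.assoc K D D D).symm.toLinearMap
          ∘ₗ lTensor D comul ∘ₗ comul) (comul h) := by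
    rw [← lTensor_comp_apply, ← coassoc_symm]
  rw [e1]
  have e2 : lTensor D ((TensorProduct.assoc K D D D).symm.toLinearMap
          ∘ₗ lTensor D comul ∘ₗ comul)
      = lTensor D (TensorProduct.assoc K D D D).symm.toLinearMap
          ∘ₗ lTensor D (lTensor D comul) ∘ₗ lTensor D comul := by
    rw [← lTensor_comp, ← lTensor_comp]
  rw [e2]
  simp only [coe_comp, Function.comp_apply]
  have e3 : lTensor D (TensorProduct.assoc K D D D).toLinearMap
      (lTensor D (TensorProduct.assoc K D D D).symm.toLinearMap
        (lTensor D (lTensor D comul) (lTensor D comul (comul h))))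
      = lTensor D (lTensor D comul) (lTensor D comul (comul h)) := by
    rw [← lTensor_comp_apply]
    have : (TensorProduct.assoc K D D D).toLinearMap
        ∘ₗ (TensorProduct.assoc K D D D).symm.toLinearMap = LinearMap.id := by
      ext x y z; simp
    rw [this, lTensor_id, id_apply]
  rw [e3, n2', coassoc_symm_apply]
  rw [← lTensor_comp_rTensor, coe_comp, Function.comp_apply]
end ReprHelpers

section AntiMul
variable {K : Type*} [CommSemiring K] {H : Type*} [Semiring H] [HopfAlgebra K H]

open HopfAlgebra

noncomputable def curryE (f : H ⊗[K] H →ₗ[K] H) : H →ₗ[K] ConvEnd K H :=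
  TensorProduct.curry f

lemma curryE_inj : Function.Injective (curryE (K := K) (H := H)) :=
  TensorProduct.curry_injective

/-- Interpret an element of the convolution algebra as a linear map. -/
def ConvEnd.toLin {K H : Type*} [CommSemiring K] [AddCommMonoid H] [Module K H]
    (f : ConvEnd K H) : H →ₗ[K] H := f

lemma convUnitE_apply (x y : H) :
    ConvEnd.toLin ((convUnit : H →ₗ[K] ConvEnd K H) x) y
      = algebraMap K H (Coalgebra.counit (R := K) x * Coalgebra.counit (R := K) y) := by
  have e2 := LinearMap.congr_fun
    (ConvEnd.algebraMap_apply (K := K) (H := H) (Coalgebra.counit (R := K) x)) y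
  calc ConvEnd.toLin ((convUnit : H →ₗ[K] ConvEnd K H) x) y
      = (Coalgebra.counit (R := K) x • (convUnit : H →ₗ[K] H)) y := e2
    _ = algebraMap K H (Coalgebra.counit (R := K) x * Coalgebra.counit (R := K) y) := by
        rw [LinearMap.smul_apply, map_mul, Algebra.smul_def]
        rfl

lemma antipode_mul_antidistrib (a b : H) :
    antipode (R := K) (a * b) = antipode (R := K) b * antipode (R := K) a := by
  have main : curryE (antipode (R := K) ∘ₗ mul' K H)
      = curryE (mul' K H ∘ₗ map (antipode (R := K)) (antipode (R := K)) ∘ₗ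
          (TensorProduct.comm K H H).toLinearMap) := by
    apply conv_inv_unique (f := curryE (mul' K H))
    · -- conv (curry (S∘μ)) (curry μ) = unit
      apply LinearMap.ext; intro x
      apply LinearMap.ext (f := ConvEnd.toLin _) (g := ConvEnd.toLin _); intro y
      have lhs : ConvEnd.toLin ((conv (curryE (antipode (R := K) ∘ₗ mul' K H))
            (curryE (mul' K H))) x) y
          = ∑ n ∈ (ℛ K x).index, ∑ m ∈ (ℛ K y).index,
              antipode (R := K) ((ℛ K x).left n * (ℛ K y).left m) *
                ((ℛ K x).right n * (ℛ K y).right m) := by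
        rw [show ConvEnd.toLin ((conv (curryE (antipode (R := K) ∘ₗ mul' K H))
            (curryE (mul' K H))) x) y = ((conv (curryE (antipode (R := K) ∘ₗ mul' K H))
            (curryE (mul' K H))) x : ConvEnd K H).toLin y from rfl]
        rw [conv_apply_repr _ _ (ℛ K x)]
        rw [show (ConvEnd.toLin (∑ n ∈ (ℛ K x).index,
            curryE (antipode (R := K) ∘ₗ mul' K H) ((ℛ K x).left n) *
              curryE (mul' K H) ((ℛ K x).right n))) y
          = ∑ n ∈ (ℛ K x).index, ConvEnd.toLin
            (curryE (antipode (R := K) ∘ₗ mul' K H) ((ℛ K x).left n) *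
              curryE (mul' K H) ((ℛ K x).right n)) y from
          LinearMap.sum_apply _ _ y]
        apply Finset.sum_congr rfl; intro n _
        rw [show (curryE (antipode (R := K) ∘ₗ mul' K H) ((ℛ K x).left n) *
              curryE (mul' K H) ((ℛ K x).right n) : ConvEnd K H)
            = conv (TensorProduct.curry (antipode (R := K) ∘ₗ mul' K H) ((ℛ K x).left n))
                (TensorProduct.curry (mul' K H) ((ℛ K x).right n)) from rfl]
        rw [show ConvEnd.toLin (conv (TensorProduct.curry
              (antipode (R := K) ∘ₗ mul' K H) ((ℛ K x).left n))
              (TensorProduct.curry (mul' K H) ((ℛ K x).right n)) : ConvEnd K H) y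
            = (conv (TensorProduct.curry (antipode (R := K) ∘ₗ mul' K H) ((ℛ K x).left n))
              (TensorProduct.curry (mul' K H) ((ℛ K x).right n))) y from rfl]
        rw [conv_apply_repr _ _ (ℛ K y)]
        rfl
      rw [lhs]
      have key : ∑ n ∈ (ℛ K x).index, ∑ m ∈ (ℛ K y).index,
            antipode (R := K) ((ℛ K x).left n * (ℛ K y).left m) *
              ((ℛ K x).right n * (ℛ K y).right m)
          = mul' K H (rTensor H (antipode (R := K)) (comul (x * y))) := by
        rw [Bialgebra.comul_mul, ← (ℛ K x).eq, ← (ℛ K y).eq, Finset.sum_mul_sum]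
        simp only [Algebra.TensorProduct.tmul_mul_tmul, map_sum, rTensor_tmul, mul'_apply]
      rw [key, mul_antipode_rTensor_comul_apply]
      show _ = ConvEnd.toLin (convUnit x) y
      rw [convUnitE_apply, Bialgebra.counit_mul]
    · -- conv (curry μ) (curry Hm) = unit
      apply LinearMap.ext; intro x
      apply LinearMap.ext (f := ConvEnd.toLin _) (g := ConvEnd.toLin _); intro y
      set Hm := mul' K H ∘ₗ map (antipode (R := K)) (antipode (R := K)) ∘ₗ
          (TensorProduct.comm K H H).toLinearMap with hHm
      have hHmApp : ∀ u v : H, Hm (u ⊗ₜ[K] v)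
          = antipode (R := K) v * antipode (R := K) u := by
        intro u v; simp [hHm]
      have lhs : ConvEnd.toLin ((conv (curryE (mul' K H)) (curryE Hm)) x) y
          = ∑ n ∈ (ℛ K x).index, ∑ m ∈ (ℛ K y).index,
              ((ℛ K x).left n * (ℛ K y).left m) *
                (antipode (R := K) ((ℛ K y).right m) * antipode (R := K) ((ℛ K x).right n)) := by
        rw [show ConvEnd.toLin ((conv (curryE (mul' K H)) (curryE Hm)) x) y
            = ((conv (curryE (mul' K H)) (curryE Hm)) x : ConvEnd K H).toLin y from rfl]
        rw [conv_apply_repr _ _ (ℛ K x)]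
        rw [show (ConvEnd.toLin (∑ n ∈ (ℛ K x).index,
            curryE (mul' K H) ((ℛ K x).left n) * curryE Hm ((ℛ K x).right n))) y
          = ∑ n ∈ (ℛ K x).index, ConvEnd.toLin
            (curryE (mul' K H) ((ℛ K x).left n) * curryE Hm ((ℛ K x).right n)) y from
          LinearMap.sum_apply _ _ y]
        apply Finset.sum_congr rfl; intro n _
        rw [show (curryE (mul' K H) ((ℛ K x).left n) * curryE Hm ((ℛ K x).right n) : ConvEnd K H)
            = conv (TensorProduct.curry (mul' K H) ((ℛ K x).left n))
                (TensorProduct.curry Hm ((ℛ K x).right n)) from rfl]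
        rw [show ConvEnd.toLin (conv (TensorProduct.curry (mul' K H) ((ℛ K x).left n))
              (TensorProduct.curry Hm ((ℛ K x).right n)) : ConvEnd K H) y
            = (conv (TensorProduct.curry (mul' K H) ((ℛ K x).left n))
              (TensorProduct.curry Hm ((ℛ K x).right n))) y from rfl]
        rw [conv_apply_repr _ _ (ℛ K y)]
        apply Finset.sum_congr rfl; intro m _
        rw [TensorProduct.curry_apply, TensorProduct.curry_apply, mul'_apply, hHmApp]
      rw [lhs]
      have key : ∀ n, ∑ m ∈ (ℛ K y).index,
            ((ℛ K x).left n * (ℛ K y).left m) *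
              (antipode (R := K) ((ℛ K y).right m) * antipode (R := K) ((ℛ K x).right n))
          = Coalgebra.counit (R := K) y •
              ((ℛ K x).left n * antipode (R := K) ((ℛ K x).right n)) := by
        intro n
        have assoc4 : ∀ m, ((ℛ K x).left n * (ℛ K y).left m) *
              (antipode (R := K) ((ℛ K y).right m) * antipode (R := K) ((ℛ K x).right n))
            = (ℛ K x).left n * (((ℛ K y).left m * antipode (R := K) ((ℛ K y).right m)) *
                antipode (R := K) ((ℛ K x).right n)) := by
          intro m; simp only [mul_assoc]
        rw [Finset.sum_congr rfl (fun m _ => assoc4 m), ← Finset.mul_sum, ← Finset.sum_mul,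
          sum_mul_antipode_eq_algebraMap_counit (ℛ K y)]
        rw [Algebra.commutes, ← mul_assoc, ← Algebra.commutes, ← Algebra.smul_def]
      rw [Finset.sum_congr rfl (fun n _ => key n), ← Finset.smul_sum,
        sum_mul_antipode_eq_algebraMap_counit (ℛ K x)]
      show _ = ConvEnd.toLin (convUnit x) y
      rw [convUnitE_apply, Algebra.smul_def, ← map_mul,
        mul_comm (Coalgebra.counit (R := K) y) (Coalgebra.counit (R := K) x)]
  have h2 := curryE_inj main
  have h3 := LinearMap.congr_fun h2 (a ⊗ₜ[K] b)
  simpa using h3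

end AntiMul

section MulTensor
variable {K : Type*} [CommSemiring K] {A B : Type*} [Semiring A] [Algebra K A]
  [Semiring B] [Algebra K B]

lemma mul'_tensorProduct :
    mul' K (A ⊗[K] B) = map (mul' K A) (mul' K B) ∘ₗ
      (tensorTensorTensorComm K A B A B).toLinearMap := by
  ext a b c d
  simp [Algebra.TensorProduct.tmul_mul_tmul]

end MulTensor

section AntiComul
variable {K : Type*} [CommSemiring K] {H : Type*} [Semiring H] [HopfAlgebra K H]

open HopfAlgebra

lemma comul_antipode :
    comul ∘ₗ antipode (R := K) (A := H)
      = (TensorProduct.comm K H H).toLinearMap ∘ₗ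
          map (antipode (R := K)) (antipode (R := K)) ∘ₗ comul := by
  apply conv_inv_unique (f := (comul : H →ₗ[K] H ⊗[K] H))
  · -- conv (Δ∘S) Δ = unit
    apply LinearMap.ext; intro h
    rw [conv_apply_repr _ _ (ℛ K h)]
    calc ∑ n ∈ (ℛ K h).index,
          (comul ∘ₗ antipode (R := K)) ((ℛ K h).left n) * comul ((ℛ K h).right n)
        = ∑ n ∈ (ℛ K h).index,
            comul (antipode (R := K) ((ℛ K h).left n) * (ℛ K h).right n) := by
          apply Finset.sum_congr rfl; intro n _
          rw [coe_comp, Function.comp_apply, Bialgebra.comul_mul]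
      _ = comul (R := K) (∑ n ∈ (ℛ K h).index,
            antipode (R := K) ((ℛ K h).left n) * (ℛ K h).right n) := by rw [map_sum]
      _ = convUnit h := by
          rw [sum_antipode_mul_eq_algebraMap_counit (ℛ K h)]
          simp only [convUnit, coe_comp, Function.comp_apply, Algebra.linearMap_apply]
          rw [← Bialgebra.comulAlgHom_apply K H, AlgHom.commutes]
  · -- conv Δ (comm ∘ mapSS ∘ Δ) = unit
    set S := antipode (R := K) (A := H)
    set Hm2 := (TensorProduct.comm K H H).toLinearMap ∘ₗ map S S ∘ₗ comul with hHm2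
    set Φ : (H ⊗[K] H) ⊗[K] (H ⊗[K] H) →ₗ[K] H ⊗[K] H :=
      map (mul' K H) (mul' K H) ∘ₗ (tensorTensorTensorComm K H H H H).toLinearMap ∘ₗ
        lTensor (H ⊗[K] H) ((TensorProduct.comm K H H).toLinearMap ∘ₗ map S S) with hΦ
    have hΦapp : ∀ x y z w : H, Φ ((x ⊗ₜ[K] y) ⊗ₜ[K] (z ⊗ₜ[K] w))
        = (x * S w) ⊗ₜ[K] (y * S z) := by
      intro x y z w
      simp [hΦ, tensorTensorTensorComm_tmul]
    have dec : conv comul Hm2 = Φ ∘ₗ map (comul (R := K) (A := H)) comul ∘ₗ comul := by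
      rw [conv, hHm2, hΦ]
      rw [show map (comul (R := K) (A := H))
            ((TensorProduct.comm K H H).toLinearMap ∘ₗ map S S ∘ₗ comul)
          = lTensor (H ⊗[K] H) ((TensorProduct.comm K H H).toLinearMap ∘ₗ map S S) ∘ₗ
              map comul comul from by
        rw [lTensor, ← map_comp, id_comp, comp_assoc]]
      rw [mul'_tensorProduct]
      simp only [comp_assoc]
    rw [dec, fourLeg]
    apply LinearMap.ext; intro h
    set r := ℛ K h
    set a2 : (n : r.ι) → Coalgebra.Repr K (r.right n) (H × H) := fun n => ℛ K (r.right n) with ha2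
    set c : (n : r.ι) → (k : (a2 n).ι) → Coalgebra.Repr K ((a2 n).left k) (H × H) :=
      fun n k => ℛ K ((a2 n).left k) with hc
    simp only [coe_comp, Function.comp_apply, LinearEquiv.coe_coe]
    have st1 : lTensor H (comul (R := K)) (comul h)
        = ∑ n ∈ r.index, ∑ k ∈ (a2 n).index,
            r.left n ⊗ₜ[K] ((a2 n).left k ⊗ₜ[K] (a2 n).right k) := by
      rw [← r.eq, map_sum]
      exact Finset.sum_congr rfl fun n _ => by rw [lTensor_tmul, ← (a2 n).eq, tmul_sum]
    have st2 : lTensor H (rTensor H (comul (R := K)))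
          (∑ n ∈ r.index, ∑ k ∈ (a2 n).index,
            r.left n ⊗ₜ[K] ((a2 n).left k ⊗ₜ[K] (a2 n).right k))
        = ∑ n ∈ r.index, ∑ k ∈ (a2 n).index, ∑ m ∈ (c n k).index,
            r.left n ⊗ₜ[K] (((c n k).left m ⊗ₜ[K] (c n k).right m) ⊗ₜ[K] (a2 n).right k) := by
      rw [map_sum]
      refine Finset.sum_congr rfl fun n _ => ?_
      rw [map_sum]
      refine Finset.sum_congr rfl fun k _ => ?_
      rw [lTensor_tmul, rTensor_tmul, ← (c n k).eq, sum_tmul, tmul_sum]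
    have st3 : lTensor H (TensorProduct.assoc K H H H).toLinearMap
          (∑ n ∈ r.index, ∑ k ∈ (a2 n).index, ∑ m ∈ (c n k).index,
            r.left n ⊗ₜ[K] (((c n k).left m ⊗ₜ[K] (c n k).right m) ⊗ₜ[K] (a2 n).right k))
        = ∑ n ∈ r.index, ∑ k ∈ (a2 n).index, ∑ m ∈ (c n k).index,
            r.left n ⊗ₜ[K] ((c n k).left m ⊗ₜ[K] ((c n k).right m ⊗ₜ[K] (a2 n).right k)) := by
      rw [map_sum]
      refine Finset.sum_congr rfl fun n _ => ?_
      rw [map_sum]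
      refine Finset.sum_congr rfl fun k _ => ?_
      rw [map_sum]
      refine Finset.sum_congr rfl fun m _ => ?_
      simp only [lTensor_tmul, LinearEquiv.coe_coe, assoc_tmul]
    have st4 : (TensorProduct.assoc K H H (H ⊗[K] H)).symm
          (∑ n ∈ r.index, ∑ k ∈ (a2 n).index, ∑ m ∈ (c n k).index,
            r.left n ⊗ₜ[K] ((c n k).left m ⊗ₜ[K] ((c n k).right m ⊗ₜ[K] (a2 n).right k)))
        = ∑ n ∈ r.index, ∑ k ∈ (a2 n).index, ∑ m ∈ (c n k).index,
            (r.left n ⊗ₜ[K] (c n k).left m) ⊗ₜ[K] ((c n k).right m ⊗ₜ[K] (a2 n).right k) := by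
      rw [map_sum]
      refine Finset.sum_congr rfl fun n _ => ?_
      rw [map_sum]
      refine Finset.sum_congr rfl fun k _ => ?_
      rw [map_sum]
      refine Finset.sum_congr rfl fun m _ => ?_
      simp only [assoc_symm_tmul]
    have st5 : Φ (∑ n ∈ r.index, ∑ k ∈ (a2 n).index, ∑ m ∈ (c n k).index,
            (r.left n ⊗ₜ[K] (c n k).left m) ⊗ₜ[K] ((c n k).right m ⊗ₜ[K] (a2 n).right k))
        = ∑ n ∈ r.index, ∑ k ∈ (a2 n).index, ∑ m ∈ (c n k).index,
            (r.left n * S ((a2 n).right k)) ⊗ₜ[K] ((c n k).left m * S ((c n k).right m)) := by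
      rw [map_sum]
      refine Finset.sum_congr rfl fun n _ => ?_
      rw [map_sum]
      refine Finset.sum_congr rfl fun k _ => ?_
      rw [map_sum]
      exact Finset.sum_congr rfl fun m _ => hΦapp _ _ _ _
    rw [st1, st2, st3, st4, st5]
    -- now contract the inner sums
    calc ∑ n ∈ r.index, ∑ k ∈ (a2 n).index, ∑ m ∈ (c n k).index,
          (r.left n * S ((a2 n).right k)) ⊗ₜ[K] ((c n k).left m * S ((c n k).right m))
        = ∑ n ∈ r.index, ∑ k ∈ (a2 n).index,
            Coalgebra.counit (R := K) ((a2 n).left k) •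
              ((r.left n * S ((a2 n).right k)) ⊗ₜ[K] (1 : H)) := by
          apply Finset.sum_congr rfl; intro n _
          apply Finset.sum_congr rfl; intro k _
          rw [← tmul_sum, sum_mul_antipode_eq_algebraMap_counit (c n k), Algebra.algebraMap_eq_smul_one,
            tmul_smul]
      _ = ∑ n ∈ r.index, (r.left n * S (r.right n)) ⊗ₜ[K] (1 : H) := by
          apply Finset.sum_congr rfl; intro n _
          calc ∑ k ∈ (a2 n).index, Coalgebra.counit (R := K) ((a2 n).left k) •
                ((r.left n * S ((a2 n).right k)) ⊗ₜ[K] (1 : H))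
              = (r.left n * (∑ k ∈ (a2 n).index,
                  Coalgebra.counit (R := K) ((a2 n).left k) • S ((a2 n).right k))) ⊗ₜ[K]
                    (1 : H) := by
                rw [Finset.mul_sum, sum_tmul]
                apply Finset.sum_congr rfl; intro k _
                rw [mul_smul_comm, smul_tmul']
            _ = (r.left n * S (r.right n)) ⊗ₜ[K] (1 : H) := by
                rw [show ∑ k ∈ (a2 n).index, Coalgebra.counit (R := K) ((a2 n).left k) •
                    S ((a2 n).right k)
                  = S (∑ k ∈ (a2 n).index, Coalgebra.counit (R := K) ((a2 n).left k) •
                      (a2 n).right k) from by rw [map_sum]; simp only [map_smul]]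
                rw [sum_counit_smul_right (a2 n)]
      _ = convUnit h := by
          rw [← sum_tmul, sum_mul_antipode_eq_algebraMap_counit r]
          simp only [convUnit, coe_comp, Function.comp_apply, Algebra.linearMap_apply]
          rw [Algebra.TensorProduct.algebraMap_apply]

end AntiComul

section Main
variable {K : Type*} [CommSemiring K] {H : Type*} [Semiring H] [HopfAlgebra K H]
  {C : Type*} [Semiring C] [Bialgebra K C]

open HopfAlgebra

lemma counit_antipode (h : H) :
    Coalgebra.counit (R := K) (antipode (R := K) h) = Coalgebra.counit (R := K) h := by
  have e1 : antipode (R := K) (A := H) h = antipode (R := K)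
      (∑ n ∈ (ℛ K h).index, Coalgebra.counit (R := K) ((ℛ K h).right n) • (ℛ K h).left n) := by
    rw [sum_counit_smul_left (ℛ K h)]
  calc Coalgebra.counit (R := K) (antipode (R := K) h)
      = ∑ n ∈ (ℛ K h).index, Coalgebra.counit (R := K) (antipode (R := K) ((ℛ K h).left n)) *
          Coalgebra.counit (R := K) ((ℛ K h).right n) := by
        rw [e1, map_sum, map_sum]
        refine Finset.sum_congr rfl fun n _ => ?_
        rw [map_smul, map_smul, smul_eq_mul, mul_comm]
    _ = Coalgebra.counit (R := K)
          (∑ n ∈ (ℛ K h).index, antipode (R := K) ((ℛ K h).left n) * (ℛ K h).right n) := by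
        rw [map_sum]
        exact Finset.sum_congr rfl fun n _ => (Bialgebra.counit_mul _ _).symm
    _ = Coalgebra.counit (R := K) h := by
        rw [sum_antipode_mul_eq_algebraMap_counit (ℛ K h)]
        rw [← Bialgebra.counitAlgHom_apply K H, AlgHom.commutes]
        simp

variable (i : H →ₐc[K] C) (π : C →ₐc[K] H)

/-- `T = i ∘ S ∘ π`. -/
noncomputable def tMap : C →ₗ[K] C :=
  i.toLinearMap ∘ₗ HopfAlgebra.antipode (R := K) ∘ₗ π.toLinearMap

/-- `Π = id ⋆ (i∘S∘π)`. -/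
noncomputable def piMap : C →ₗ[K] C :=
  mul' K C ∘ₗ lTensor C (tMap i π) ∘ₗ Coalgebra.comul

lemma tMap_apply (x : C) : tMap i π x = i (antipode (R := K) (π x)) := rfl

lemma piMap_apply_repr {x : C} {ι : Type*} (r : Coalgebra.Repr K x ι) :
    piMap i π x = ∑ n ∈ r.index, r.left n * tMap i π (r.right n) := by
  simp only [_root_.piMap, coe_comp, Function.comp_apply, ← r.eq, map_sum, lTensor_tmul, mul'_apply]

lemma tMap_mul_i (hπi : ∀ h : H, π (i h) = h) (x : C) (h : H) :
    tMap i π (x * i h) = i (antipode (R := K) h) * tMap i π x := by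
  rw [tMap_apply, tMap_apply, map_mul π, hπi, _root_.antipode_mul_antidistrib, map_mul i]

lemma piMap_mul_i (hπi : ∀ h : H, π (i h) = h) (x : C) (h : H) :
    piMap i π (x * i h) = Coalgebra.counit (R := K) h • piMap i π x := by
  have hcom : Coalgebra.comul (R := K) (x * i h)
      = ∑ n ∈ (ℛ K x).index, ∑ m ∈ (ℛ K h).index,
          ((ℛ K x).left n * i ((ℛ K h).left m)) ⊗ₜ[K]
            ((ℛ K x).right n * i ((ℛ K h).right m)) := by
    rw [Bialgebra.comul_mul, ← (ℛ K x).eq,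
      show Coalgebra.comul (R := K) (i h) = map i.toLinearMap i.toLinearMap
          (Coalgebra.comul (R := K) h) from
        (LinearMap.congr_fun (CoalgHomClass.map_comp_comul i) h).symm,
      ← (ℛ K h).eq, map_sum, Finset.sum_mul_sum]
    refine Finset.sum_congr rfl fun n _ => Finset.sum_congr rfl fun m _ => ?_
    rw [map_tmul, Algebra.TensorProduct.tmul_mul_tmul]
    rfl
  have e0 : piMap i π (x * i h) = mul' K C (lTensor C (tMap i π)
      (Coalgebra.comul (R := K) (x * i h))) := rfl
  rw [e0, hcom, map_sum, map_sum]
  calc ∑ n ∈ (ℛ K x).index, mul' K C (lTensor C (tMap i π)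
        (∑ m ∈ (ℛ K h).index, ((ℛ K x).left n * i ((ℛ K h).left m)) ⊗ₜ[K]
          ((ℛ K x).right n * i ((ℛ K h).right m))))
      = ∑ n ∈ (ℛ K x).index, ∑ m ∈ (ℛ K h).index,
          (ℛ K x).left n * (i ((ℛ K h).left m) * (i (antipode (R := K) ((ℛ K h).right m)) *
            tMap i π ((ℛ K x).right n))) := by
        refine Finset.sum_congr rfl fun n _ => ?_
        rw [map_sum, map_sum]
        refine Finset.sum_congr rfl fun m _ => ?_
        rw [lTensor_tmul, mul'_apply, tMap_mul_i i π hπi]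
        simp only [mul_assoc]
    _ = ∑ n ∈ (ℛ K x).index, (ℛ K x).left n *
          (i (∑ m ∈ (ℛ K h).index, (ℛ K h).left m * antipode (R := K) ((ℛ K h).right m)) *
            tMap i π ((ℛ K x).right n)) := by
        refine Finset.sum_congr rfl fun n _ => ?_
        rw [← Finset.mul_sum]
        congr 1
        rw [map_sum, Finset.sum_mul]
        refine Finset.sum_congr rfl fun m _ => ?_
        rw [map_mul i, mul_assoc]
    _ = Coalgebra.counit (R := K) h • piMap i π x := by
        rw [sum_mul_antipode_eq_algebraMap_counit (ℛ K h), AlgHomClass.commutes,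
          piMap_apply_repr i π (ℛ K x), Finset.smul_sum]
        refine Finset.sum_congr rfl fun n _ => ?_
        rw [← Algebra.smul_def, mul_smul_comm]

lemma comul_tMap :
    Coalgebra.comul (R := K) ∘ₗ tMap i π
      = map (tMap i π) (tMap i π) ∘ₗ (TensorProduct.comm K C C).toLinearMap ∘ₗ
          Coalgebra.comul := by
  have e : map i.toLinearMap i.toLinearMap ∘ₗ (TensorProduct.comm K H H).toLinearMap ∘ₗ
        map (antipode (R := K) (A := H)) (antipode (R := K)) ∘ₗ
          map π.toLinearMap π.toLinearMap
      = map (tMap i π) (tMap i π) ∘ₗ (TensorProduct.comm K C C).toLinearMap := by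
    ext x y
    simp [tMap_apply]
    rfl
  apply LinearMap.ext; intro x
  calc Coalgebra.comul (R := K) (tMap i π x)
      = map i.toLinearMap i.toLinearMap
          (Coalgebra.comul (R := K) (antipode (R := K) (π x))) := by
        rw [tMap_apply, ← CoalgHomClass.map_comp_comul_apply i]
        rfl
    _ = map i.toLinearMap i.toLinearMap ((TensorProduct.comm K H H).toLinearMap
          (map (antipode (R := K)) (antipode (R := K)) (Coalgebra.comul (R := K) (π x)))) := by
        have hca := LinearMap.congr_fun (comul_antipode (K := K) (H := H)) (π x)
        simp only [coe_comp, Function.comp_apply, LinearEquiv.coe_coe] at hca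
        rw [hca]
        rfl
    _ = map i.toLinearMap i.toLinearMap ((TensorProduct.comm K H H).toLinearMap
          (map (antipode (R := K)) (antipode (R := K))
            (map π.toLinearMap π.toLinearMap (Coalgebra.comul (R := K) x)))) := by
        rw [← CoalgHomClass.map_comp_comul_apply π]
        rfl
    _ = map (tMap i π) (tMap i π) ((TensorProduct.comm K C C).toLinearMap
          (Coalgebra.comul (R := K) x)) := by
        have h5 := LinearMap.congr_fun e (Coalgebra.comul (R := K) x)
        simpa only [coe_comp, Function.comp_apply] using h5

/-- Structural form of `Δ ∘ Π`. -/
lemma comul_piMap :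
    Coalgebra.comul (R := K) ∘ₗ piMap i π
      = (map (mul' K C) (mul' K C) ∘ₗ (tensorTensorTensorComm K C C C C).toLinearMap ∘ₗ
          lTensor (C ⊗[K] C) (map (tMap i π) (tMap i π) ∘ₗ
            (TensorProduct.comm K C C).toLinearMap))
        ∘ₗ map (Coalgebra.comul (R := K) (A := C)) Coalgebra.comul ∘ₗ Coalgebra.comul := by
  have c1 : Coalgebra.comul (R := K) ∘ₗ mul' K C
      = mul' K (C ⊗[K] C) ∘ₗ map (Coalgebra.comul (R := K) (A := C)) Coalgebra.comul := by
    ext x y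
    simp [Bialgebra.comul_mul]
  have c2 : map (Coalgebra.comul (R := K) (A := C)) Coalgebra.comul ∘ₗ lTensor C (tMap i π)
      = lTensor (C ⊗[K] C) (map (tMap i π) (tMap i π) ∘ₗ
          (TensorProduct.comm K C C).toLinearMap) ∘ₗ
        map (Coalgebra.comul (R := K) (A := C)) Coalgebra.comul := by
    rw [lTensor, lTensor, ← map_comp, ← map_comp]
    simp only [id_comp, comp_id, comp_assoc, comul_tMap]
  calc Coalgebra.comul (R := K) ∘ₗ piMap i π
      = ((Coalgebra.comul (R := K) ∘ₗ mul' K C) ∘ₗ lTensor C (tMap i π)) ∘ₗ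
          Coalgebra.comul := by
        rw [_root_.piMap]; simp only [comp_assoc]
    _ = mul' K (C ⊗[K] C) ∘ₗ (map (Coalgebra.comul (R := K) (A := C)) Coalgebra.comul ∘ₗ
          lTensor C (tMap i π)) ∘ₗ Coalgebra.comul := by
        rw [c1]; simp only [comp_assoc]
    _ = (mul' K (C ⊗[K] C) ∘ₗ lTensor (C ⊗[K] C) (map (tMap i π) (tMap i π) ∘ₗ
          (TensorProduct.comm K C C).toLinearMap)) ∘ₗ
            map (Coalgebra.comul (R := K) (A := C)) Coalgebra.comul ∘ₗ Coalgebra.comul := by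
        rw [c2]; simp only [comp_assoc]
    _ = _ := by
        rw [mul'_tensorProduct]; simp only [comp_assoc]

lemma phiC_app (p q u v : C) :
    map (mul' K C) (mul' K C) ((tensorTensorTensorComm K C C C C)
      (lTensor (C ⊗[K] C) (map (tMap i π) (tMap i π) ∘ₗ (TensorProduct.comm K C C).toLinearMap)
        ((p ⊗ₜ[K] q) ⊗ₜ[K] (u ⊗ₜ[K] v))))
      = (p * tMap i π v) ⊗ₜ[K] (q * tMap i π u) := by
  simp [tensorTensorTensorComm_tmul]

lemma comul_piMap_bal {x : C} {ι : Type*} (r : Coalgebra.Repr K x ι)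
    (a1 : (n : r.ι) → Coalgebra.Repr K (r.left n) ι)
    (a2 : (n : r.ι) → Coalgebra.Repr K (r.right n) ι) :
    Coalgebra.comul (R := K) (piMap i π x)
      = ∑ n ∈ r.index, ∑ j ∈ (a1 n).index, ∑ k ∈ (a2 n).index,
          ((a1 n).left j * tMap i π ((a2 n).right k)) ⊗ₜ[K]
            ((a1 n).right j * tMap i π ((a2 n).left k)) := by
  have h0 := LinearMap.congr_fun (comul_piMap i π) x
  simp only [coe_comp, Function.comp_apply, LinearEquiv.coe_coe] at h0
  rw [h0]
  have st1 : map (Coalgebra.comul (R := K) (A := C)) Coalgebra.comul (Coalgebra.comul x)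
      = ∑ n ∈ r.index, ∑ j ∈ (a1 n).index, ∑ k ∈ (a2 n).index,
          ((a1 n).left j ⊗ₜ[K] (a1 n).right j) ⊗ₜ[K] ((a2 n).left k ⊗ₜ[K] (a2 n).right k) := by
    rw [← r.eq, map_sum]
    refine Finset.sum_congr rfl fun n _ => ?_
    rw [map_tmul, ← (a1 n).eq, ← (a2 n).eq, sum_tmul]
    exact Finset.sum_congr rfl fun j _ => tmul_sum _ _ _
  rw [st1]
  simp only [map_sum]
  refine Finset.sum_congr rfl fun n _ => ?_
  refine Finset.sum_congr rfl fun j _ => ?_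
  exact Finset.sum_congr rfl fun k _ => phiC_app i π _ _ _ _

lemma comul_piMap_mid {x : C} {ι : Type*} (r : Coalgebra.Repr K x ι)
    (a2 : (n : r.ι) → Coalgebra.Repr K (r.right n) ι)
    (c : (n : r.ι) → (k : (a2 n).ι) → Coalgebra.Repr K ((a2 n).left k) ι) :
    Coalgebra.comul (R := K) (piMap i π x)
      = ∑ n ∈ r.index, ∑ k ∈ (a2 n).index, ∑ m ∈ (c n k).index,
          (r.left n * tMap i π ((a2 n).right k)) ⊗ₜ[K]
            ((c n k).left m * tMap i π ((c n k).right m)) := by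
  have h0 := LinearMap.congr_fun (comul_piMap i π) x
  simp only [coe_comp, Function.comp_apply, LinearEquiv.coe_coe] at h0
  rw [h0]
  have h1 := LinearMap.congr_fun (fourLeg (K := K) (D := C)) x
  simp only [coe_comp, Function.comp_apply, LinearEquiv.coe_coe] at h1
  rw [h1]
  have st1 : lTensor C (Coalgebra.comul (R := K)) (Coalgebra.comul x)
      = ∑ n ∈ r.index, ∑ k ∈ (a2 n).index,
          r.left n ⊗ₜ[K] ((a2 n).left k ⊗ₜ[K] (a2 n).right k) := by
    rw [← r.eq, map_sum]
    exact Finset.sum_congr rfl fun n _ => by rw [lTensor_tmul, ← (a2 n).eq, tmul_sum]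
  have st2 : lTensor C (rTensor C (Coalgebra.comul (R := K)))
        (∑ n ∈ r.index, ∑ k ∈ (a2 n).index,
          r.left n ⊗ₜ[K] ((a2 n).left k ⊗ₜ[K] (a2 n).right k))
      = ∑ n ∈ r.index, ∑ k ∈ (a2 n).index, ∑ m ∈ (c n k).index,
          r.left n ⊗ₜ[K] (((c n k).left m ⊗ₜ[K] (c n k).right m) ⊗ₜ[K] (a2 n).right k) := by
    rw [map_sum]
    refine Finset.sum_congr rfl fun n _ => ?_
    rw [map_sum]
    refine Finset.sum_congr rfl fun k _ => ?_
    rw [lTensor_tmul, rTensor_tmul, ← (c n k).eq, sum_tmul, tmul_sum]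
  have st3 : lTensor C (TensorProduct.assoc K C C C).toLinearMap
        (∑ n ∈ r.index, ∑ k ∈ (a2 n).index, ∑ m ∈ (c n k).index,
          r.left n ⊗ₜ[K] (((c n k).left m ⊗ₜ[K] (c n k).right m) ⊗ₜ[K] (a2 n).right k))
      = ∑ n ∈ r.index, ∑ k ∈ (a2 n).index, ∑ m ∈ (c n k).index,
          r.left n ⊗ₜ[K] ((c n k).left m ⊗ₜ[K] ((c n k).right m ⊗ₜ[K] (a2 n).right k)) := by
    rw [map_sum]
    refine Finset.sum_congr rfl fun n _ => ?_
    rw [map_sum]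
    refine Finset.sum_congr rfl fun k _ => ?_
    rw [map_sum]
    refine Finset.sum_congr rfl fun m _ => ?_
    simp only [lTensor_tmul, LinearEquiv.coe_coe, assoc_tmul]
  have st4 : (TensorProduct.assoc K C C (C ⊗[K] C)).symm
        (∑ n ∈ r.index, ∑ k ∈ (a2 n).index, ∑ m ∈ (c n k).index,
          r.left n ⊗ₜ[K] ((c n k).left m ⊗ₜ[K] ((c n k).right m ⊗ₜ[K] (a2 n).right k)))
      = ∑ n ∈ r.index, ∑ k ∈ (a2 n).index, ∑ m ∈ (c n k).index,
          (r.left n ⊗ₜ[K] (c n k).left m) ⊗ₜ[K] ((c n k).right m ⊗ₜ[K] (a2 n).right k) := by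
    rw [map_sum]
    refine Finset.sum_congr rfl fun n _ => ?_
    rw [map_sum]
    refine Finset.sum_congr rfl fun k _ => ?_
    rw [map_sum]
    refine Finset.sum_congr rfl fun m _ => ?_
    simp only [assoc_symm_tmul]
  rw [st1, st2, st3, st4]
  simp only [map_sum]
  refine Finset.sum_congr rfl fun n _ => ?_
  refine Finset.sum_congr rfl fun k _ => ?_
  exact Finset.sum_congr rfl fun m _ => phiC_app i π _ _ _ _

lemma piMap_mul_tMap (hπi : ∀ h : H, π (i h) = h) (y z : C) :
    piMap i π (y * tMap i π z) = Coalgebra.counit (R := K) z • piMap i π y := by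
  rw [tMap_apply, piMap_mul_i i π hπi, _root_.counit_antipode, CoalgHomClass.counit_comp_apply π]

/-- Identity B: `(Π ⊗ id) ∘ Δ ∘ Π = (Π ⊗ Π) ∘ Δ`. -/
lemma rTensor_piMap_comul_piMap (hπi : ∀ h : H, π (i h) = h) :
    rTensor C (piMap i π) ∘ₗ Coalgebra.comul ∘ₗ piMap i π
      = map (piMap i π) (piMap i π) ∘ₗ Coalgebra.comul (R := K) := by
  apply LinearMap.ext; intro x
  set r := ℛ K x with hr
  set a1 : (n : r.ι) → Coalgebra.Repr K (r.left n) (C × C) := fun n => ℛ K (r.left n) with ha1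
  set a2 : (n : r.ι) → Coalgebra.Repr K (r.right n) (C × C) := fun n => ℛ K (r.right n) with ha2
  simp only [coe_comp, Function.comp_apply]
  rw [comul_piMap_bal i π r a1 a2, map_sum]
  calc ∑ n ∈ r.index, rTensor C (piMap i π) (∑ j ∈ (a1 n).index, ∑ k ∈ (a2 n).index,
          ((a1 n).left j * tMap i π ((a2 n).right k)) ⊗ₜ[K]
            ((a1 n).right j * tMap i π ((a2 n).left k)))
      = ∑ n ∈ r.index, ∑ j ∈ (a1 n).index,
          piMap i π ((a1 n).left j) ⊗ₜ[K] ((a1 n).right j * tMap i π (r.right n)) := by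
        refine Finset.sum_congr rfl fun n _ => ?_
        rw [map_sum]
        refine Finset.sum_congr rfl fun j _ => ?_
        rw [map_sum]
        calc ∑ k ∈ (a2 n).index, rTensor C (piMap i π)
              (((a1 n).left j * tMap i π ((a2 n).right k)) ⊗ₜ[K]
                ((a1 n).right j * tMap i π ((a2 n).left k)))
            = ∑ k ∈ (a2 n).index, Coalgebra.counit (R := K) ((a2 n).right k) •
                (piMap i π ((a1 n).left j) ⊗ₜ[K]
                  ((a1 n).right j * tMap i π ((a2 n).left k))) := by
              refine Finset.sum_congr rfl fun k _ => ?_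
              rw [rTensor_tmul, piMap_mul_tMap i π hπi, smul_tmul']
          _ = piMap i π ((a1 n).left j) ⊗ₜ[K]
                ((a1 n).right j * tMap i π (∑ k ∈ (a2 n).index,
                  Coalgebra.counit (R := K) ((a2 n).right k) • (a2 n).left k)) := by
              rw [show ∑ k ∈ (a2 n).index, Coalgebra.counit (R := K) ((a2 n).right k) •
                  (piMap i π ((a1 n).left j) ⊗ₜ[K]
                    ((a1 n).right j * tMap i π ((a2 n).left k)))
                = ∑ k ∈ (a2 n).index, piMap i π ((a1 n).left j) ⊗ₜ[K]
                    ((a1 n).right j * tMap i π (Coalgebra.counit (R := K) ((a2 n).right k) •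
                      (a2 n).left k)) from Finset.sum_congr rfl fun k _ => by
                rw [map_smul, mul_smul_comm, tmul_smul]]
              rw [← tmul_sum, ← Finset.mul_sum, ← map_sum]
          _ = piMap i π ((a1 n).left j) ⊗ₜ[K]
                ((a1 n).right j * tMap i π (r.right n)) := by
              rw [sum_counit_smul_left (a2 n)]
    _ = ∑ n ∈ r.index, ∑ k ∈ (a2 n).index,
          piMap i π (r.left n) ⊗ₜ[K] ((a2 n).left k * tMap i π ((a2 n).right k)) := by
        have hmove := congrArg (map (piMap i π) (mul' K C ∘ₗ lTensor C (tMap i π)))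
          (sum_tmul_tmul_eq r a1 a2)
        simp only [map_sum, map_tmul, coe_comp, Function.comp_apply, lTensor_tmul,
          mul'_apply] at hmove
        exact hmove
    _ = ∑ n ∈ r.index, piMap i π (r.left n) ⊗ₜ[K] piMap i π (r.right n) := by
        refine Finset.sum_congr rfl fun n _ => ?_
        rw [← tmul_sum, ← piMap_apply_repr i π (a2 n)]
    _ = map (piMap i π) (piMap i π) (Coalgebra.comul x) := by
        rw [← r.eq, map_sum]
        exact Finset.sum_congr rfl fun n _ => (map_tmul _ _ _ _).symm

/-- Identity A: `(id ⊗ Π) ∘ Δ ∘ Π = Δ ∘ Π`. -/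
lemma lTensor_piMap_comul_piMap (hπi : ∀ h : H, π (i h) = h) :
    lTensor C (piMap i π) ∘ₗ Coalgebra.comul ∘ₗ piMap i π
      = Coalgebra.comul (R := K) ∘ₗ piMap i π := by
  apply LinearMap.ext; intro x
  set r := ℛ K x with hr
  set a1 : (n : r.ι) → Coalgebra.Repr K (r.left n) (C × C) := fun n => ℛ K (r.left n) with ha1
  set a2 : (n : r.ι) → Coalgebra.Repr K (r.right n) (C × C) := fun n => ℛ K (r.right n) with ha2
  set c : (n : r.ι) → (k : (a2 n).ι) → Coalgebra.Repr K ((a2 n).left k) (C × C) :=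
    fun n k => ℛ K ((a2 n).left k) with hc
  simp only [coe_comp, Function.comp_apply]
  conv_lhs => rw [comul_piMap_bal i π r a1 a2]
  rw [map_sum]
  calc ∑ n ∈ r.index, lTensor C (piMap i π) (∑ j ∈ (a1 n).index, ∑ k ∈ (a2 n).index,
          ((a1 n).left j * tMap i π ((a2 n).right k)) ⊗ₜ[K]
            ((a1 n).right j * tMap i π ((a2 n).left k)))
      = ∑ n ∈ r.index, ∑ j ∈ (a1 n).index,
          ((a1 n).left j * tMap i π (r.right n)) ⊗ₜ[K] piMap i π ((a1 n).right j) := by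
        refine Finset.sum_congr rfl fun n _ => ?_
        rw [map_sum]
        refine Finset.sum_congr rfl fun j _ => ?_
        rw [map_sum]
        calc ∑ k ∈ (a2 n).index, lTensor C (piMap i π)
              (((a1 n).left j * tMap i π ((a2 n).right k)) ⊗ₜ[K]
                ((a1 n).right j * tMap i π ((a2 n).left k)))
            = ∑ k ∈ (a2 n).index, Coalgebra.counit (R := K) ((a2 n).left k) •
                (((a1 n).left j * tMap i π ((a2 n).right k)) ⊗ₜ[K]
                  piMap i π ((a1 n).right j)) := by
              refine Finset.sum_congr rfl fun k _ => ?_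
              rw [lTensor_tmul, piMap_mul_tMap i π hπi, tmul_smul]
          _ = ((a1 n).left j * tMap i π (∑ k ∈ (a2 n).index,
                  Coalgebra.counit (R := K) ((a2 n).left k) • (a2 n).right k)) ⊗ₜ[K]
                piMap i π ((a1 n).right j) := by
              rw [show ∑ k ∈ (a2 n).index, Coalgebra.counit (R := K) ((a2 n).left k) •
                  (((a1 n).left j * tMap i π ((a2 n).right k)) ⊗ₜ[K]
                    piMap i π ((a1 n).right j))
                = ∑ k ∈ (a2 n).index, (((a1 n).left j * tMap i π
                    (Coalgebra.counit (R := K) ((a2 n).left k) • (a2 n).right k)) ⊗ₜ[K]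
                      piMap i π ((a1 n).right j)) from Finset.sum_congr rfl fun k _ => by
                rw [map_smul, mul_smul_comm, smul_tmul']]
              rw [← sum_tmul, ← Finset.mul_sum, ← map_sum]
          _ = ((a1 n).left j * tMap i π (r.right n)) ⊗ₜ[K] piMap i π ((a1 n).right j) := by
              rw [sum_counit_smul_right (a2 n)]
    _ = ∑ n ∈ r.index, ∑ k ∈ (a2 n).index,
          (r.left n * tMap i π ((a2 n).right k)) ⊗ₜ[K] piMap i π ((a2 n).left k) := by
        have hmove := congrArg ((map (mul' K C ∘ₗ lTensor C (tMap i π)) (piMap i π)) ∘ₗ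
            (TensorProduct.assoc K C C C).symm.toLinearMap ∘ₗ
              lTensor C (TensorProduct.comm K C C).toLinearMap)
          (sum_tmul_tmul_eq r a1 a2)
        simp only [map_sum, coe_comp, Function.comp_apply, lTensor_tmul, LinearEquiv.coe_coe,
          comm_tmul, assoc_symm_tmul, map_tmul, mul'_apply] at hmove
        exact hmove
    _ = ∑ n ∈ r.index, ∑ k ∈ (a2 n).index, ∑ m ∈ (c n k).index,
          (r.left n * tMap i π ((a2 n).right k)) ⊗ₜ[K]
            ((c n k).left m * tMap i π ((c n k).right m)) := by
        refine Finset.sum_congr rfl fun n _ => ?_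
        refine Finset.sum_congr rfl fun k _ => ?_
        rw [piMap_apply_repr i π (c n k), tmul_sum]
    _ = Coalgebra.comul (R := K) (piMap i π x) := (comul_piMap_mid i π r a2 c).symm

end Main





/-- Rota--Baxter coalgebra of weight `γ`:
`Q(c₁)⊗Q(c₂) = Q(c)₁⊗Q(Q(c)₂) + Q(Q(c)₁)⊗Q(c)₂ + γ Q(c)₁⊗Q(c)₂`. -/
def IsRotaBaxterCoalgebra (K : Type*) [Field K] {C : Type*} [AddCommGroup C] [Module K C]
    (D : C →ₗ[K] C ⊗[K] C) (Q : C →ₗ[K] C) (γ : K) : Prop :=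
  TensorProduct.map Q Q ∘ₗ D =
    lTensor C Q ∘ₗ D ∘ₗ Q + rTensor C Q ∘ₗ D ∘ₗ Q + γ • (D ∘ₗ Q)

theorem bialgebraWithProjection_rotaBaxterCoalgebra
    (K : Type*) [Field K]
    (H : Type*) [Ring H] [HopfAlgebra K H]
    (C : Type*) [Ring C] [Bialgebra K C]
    (i : H →ₐc[K] C) (π : C →ₐc[K] H) (hπi : ∀ h : H, π (i h) = h)
    -- Pi = id_C ⋆ (i ∘ S ∘ π), i.e. Pi(c) = c₁ i(S(π(c₂)))
    (Pi : C →ₗ[K] C)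
    (hPi : Pi = LinearMap.mul' K C ∘ₗ
      lTensor C (i.toLinearMap ∘ₗ HopfAlgebra.antipode (R := K) ∘ₗ π.toLinearMap) ∘ₗ
        Coalgebra.comul (R := K)) :
    IsRotaBaxterCoalgebra K (Coalgebra.comul (R := K)) Pi (-1) := by
  have hPi' : Pi = piMap i π := hPi
  subst hPi'
  unfold IsRotaBaxterCoalgebra
  rw [lTensor_piMap_comul_piMap i π hπi, rTensor_piMap_comul_piMap i π hπi]
  have hneg : ((-1 : K) • (Coalgebra.comul (R := K) ∘ₗ piMap i π))
      = -(Coalgebra.comul (R := K) ∘ₗ piMap i π) := by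
    ext z
    simp
  rw [hneg]
  abel
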